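/- Assume the minipatch ranking framework on a pool S with |S| = N ≥ m, and run RAMP with B minipatches on S; let q = m/N. Then for every feature j ∈ S and every ε > 0, P(r̄_j ≥ μ_j + ε) ≤ exp(−Bq/8) + exp(−Bq·ε²/(4(m − 1)²)), and likewise P(r̄_j ≤ μ_j − ε) ≤ exp(−Bq/8) + exp(−Bq·ε²/(4(m − 1)²)). -/

import Mathlib

open MeasureTheory ProbabilityTheory Real
open scoped ENNReal Classical

noncomputable section

instance finsetMeasurableSpace {α : Type*} : MeasurableSpace (Finset α) := ⊤

/-- A random minipatch ranking on the pool `S ⊆ {1,…,M}`: `F` is uniformly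
distributed over the size-`m` subsets of `S`, and (pointwise, hence conditionally
on `F`) the ranks `rt j` for `j ∈ F` form a bijection from `F` onto `{0,…,m−1}`. -/
structure IsMinipatchRanking {Ω : Type*} [MeasurableSpace Ω] (μ : Measure Ω) {M : ℕ}
    (m : ℕ) (S : Finset (Fin M)) (F : Ω → Finset (Fin M)) (rt : Fin M → Ω → ℕ) : Prop where
  measF : Measurable F
  measRt : ∀ j, Measurable (rt j)
  subset : ∀ ω, F ω ⊆ S
  card_eq : ∀ ω, (F ω).card = m
  uniform : ∀ A : Finset (Fin M), A ⊆ S → A.card = m →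
    μ {ω | F ω = A} = ((S.card.choose m : ℝ≥0∞))⁻¹
  bij : ∀ ω, Set.BijOn (fun j => rt j ω) (F ω : Set (Fin M)) (Set.Iio m)

/-- `μ_j = E[r̃_j | j ∈ F]`. -/
def muRank {Ω : Type*} [MeasurableSpace Ω] (μ : Measure Ω) {M : ℕ}
    (F : Ω → Finset (Fin M)) (rt : Fin M → Ω → ℕ) (j : Fin M) : ℝ :=
  ∫ ω, (rt j ω : ℝ) ∂ μ[|{ω | j ∈ F ω}]

/-- Rank Consistency with parameter `p`. -/
def RankConsistency {Ω : Type*} [MeasurableSpace Ω] (μ : Measure Ω) {M : ℕ}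
    (r : Fin M → ℕ) (S : Finset (Fin M)) (F : Ω → Finset (Fin M))
    (rt : Fin M → Ω → ℕ) (p : ℝ) : Prop :=
  ∀ j ∈ S, ∀ j' ∈ S, r j < r j' →
    ENNReal.ofReal p ≤ μ[|{ω | j ∈ F ω ∧ j' ∈ F ω}] {ω | rt j ω < rt j' ω}

/-- Unbiased Ordering. -/
def UnbiasedOrdering {Ω : Type*} [MeasurableSpace Ω] (μ : Measure Ω) {M : ℕ}
    (r : Fin M → ℕ) (S : Finset (Fin M)) (F : Ω → Finset (Fin M))
    (rt : Fin M → Ω → ℕ) : Prop :=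
  ∀ j ∈ S, ∀ j' ∈ S, r j < r j' →
    (∫ ω, (rt j ω : ℝ) ∂ μ[|{ω | j ∈ F ω ∧ j' ∉ F ω}]) <
      ∫ ω, (rt j' ω : ℝ) ∂ μ[|{ω | j' ∈ F ω ∧ j ∉ F ω}]

/-- Bounded Deviation with constant `C`. -/
def BoundedDeviation {Ω : Type*} [MeasurableSpace Ω] (μ : Measure Ω) {M : ℕ}
    (r : Fin M → ℕ) (S : Finset (Fin M)) (F : Ω → Finset (Fin M))
    (rt : Fin M → Ω → ℕ) (C : ℝ) : Prop :=
  ∀ j ∈ S, ∀ j' ∈ S, r j < r j' →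
    μ {ω | (j ∈ F ω ∧ j' ∈ F ω) ∧ rt j ω < rt j' ω} ≠ 0 →
    μ {ω | (j ∈ F ω ∧ j' ∈ F ω) ∧ rt j' ω < rt j ω} ≠ 0 →
    C < (∫ ω, ((rt j' ω : ℝ) - (rt j ω : ℝ)) ∂ μ[|{ω | (j ∈ F ω ∧ j' ∈ F ω) ∧ rt j ω < rt j' ω}]) -
        ∫ ω, ((rt j ω : ℝ) - (rt j' ω : ℝ)) ∂ μ[|{ω | (j ∈ F ω ∧ j' ∈ F ω) ∧ rt j' ω < rt j ω}]

/-- Unique Top-`k` Ranks. -/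
def UniqueTopK {M : ℕ} (r : Fin M → ℕ) (k : ℕ) : Prop :=
  (∀ j j' : Fin M, j ≠ j' → min (r j) (r j') < k → r j ≠ r j') ∧
    ∀ s < k, ∃ j : Fin M, r j = s

/-- The pair `(F, r̃)` viewed as a single random variable. -/
def pairRV {Ω : Type*} {M : ℕ} (F : Ω → Finset (Fin M)) (rt : Fin M → Ω → ℕ) (ω : Ω) :
    Finset (Fin M) × (Fin M → ℕ) := (F ω, fun j => rt j ω)

/-- RAMP with `B` minipatches on `S`: `(Fb b, rtb b)` for `b = 1,…,B` are i.i.d. copies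
of the random minipatch ranking `(F, rt)` on `S`. -/
structure IsRAMP {Ω : Type*} [MeasurableSpace Ω] (μ : Measure Ω) {M : ℕ} (m : ℕ)
    (S : Finset (Fin M)) (F : Ω → Finset (Fin M)) (rt : Fin M → Ω → ℕ) {B : ℕ}
    (Fb : Fin B → Ω → Finset (Fin M)) (rtb : Fin B → Fin M → Ω → ℕ) : Prop where
  copies : ∀ b, IsMinipatchRanking μ m S (Fb b) (rtb b)
  ident : ∀ b, Measure.map (pairRV (Fb b) (rtb b)) μ = Measure.map (pairRV F rt) μ
  indep : iIndepFun (fun b => pairRV (Fb b) (rtb b)) μ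

/-- The averaged rank `r̄_j` produced by RAMP: the arithmetic mean of `rtb b j` over the
minipatches `b` containing `j`, with the convention `r̄_j = μ_j` if `j` appears in none. -/
def rampAvg {Ω : Type*} [MeasurableSpace Ω] (μ : Measure Ω) {M B : ℕ}
    (F : Ω → Finset (Fin M)) (rt : Fin M → Ω → ℕ)
    (Fb : Fin B → Ω → Finset (Fin M)) (rtb : Fin B → Fin M → Ω → ℕ)
    (j : Fin M) (ω : Ω) : ℝ :=
  if (Finset.univ.filter (fun b : Fin B => j ∈ Fb b ω)).card = 0 then muRank μ F rt j
  else (∑ b ∈ Finset.univ.filter (fun b : Fin B => j ∈ Fb b ω), (rtb b j ω : ℝ)) /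
    (Finset.univ.filter (fun b : Fin B => j ∈ Fb b ω)).card

section Aux
open Finset
lemma card_contain (M m : ℕ) (S : Finset (Fin M)) (j : Fin M) (hj : j ∈ S) (hm : 1 ≤ m) :
    ((S.powersetCard m).filter (fun A => j ∈ A)).card = (S.card - 1).choose (m - 1) := by
  have : (S.card - 1).choose (m-1) = ((S.erase j).powersetCard (m-1)).card := by
    rw [Finset.card_powersetCard, Finset.card_erase_of_mem hj]
  rw [this]
  refine Finset.card_bij' (fun A _ => A.erase j) (fun B _ => insert j B) ?hi ?hj ?li ?ri
  case hi =>
    intro A hA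
    simp only [mem_filter, mem_powersetCard] at hA
    simp only [mem_powersetCard]
    exact ⟨Finset.erase_subset_erase j hA.1.1, by rw [Finset.card_erase_of_mem hA.2, hA.1.2]⟩
  case hj =>
    intro B hB
    simp only [mem_powersetCard] at hB
    have hjB : j ∉ B := fun h => (Finset.mem_erase.1 (hB.1 h)).1 rfl
    simp only [mem_filter, mem_powersetCard]
    refine ⟨⟨Finset.insert_subset hj (hB.1.trans (Finset.erase_subset _ _)), ?_⟩, Finset.mem_insert_self _ _⟩
    rw [Finset.card_insert_of_notMem hjB, hB.2]
    omega
  case li =>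
    intro A hA
    simp only [mem_filter] at hA
    exact Finset.insert_erase hA.2
  case ri =>
    intro B hB
    simp only [mem_powersetCard] at hB
    exact Finset.erase_insert (fun h => (Finset.mem_erase.1 (hB.1 h)).1 rfl)

lemma choose_ratio (N m : ℕ) (hm : 1 ≤ m) (hmN : m ≤ N) :
    ((N-1).choose (m-1) : ℝ) / (N.choose m) = m / N := by
  have h1 : N.choose m ≠ 0 := Nat.choose_pos hmN |>.ne'
  have h2 : 1 ≤ N := hm.trans hmN
  have key : N * (N-1).choose (m-1) = N.choose m * m := by
    have := Nat.add_one_mul_choose_eq (N-1) (m-1)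
    have e1 : N - 1 + 1 = N := by omega
    have e2 : m - 1 + 1 = m := by omega
    rw [e1, e2] at this
    exact this
  have hN : (N:ℝ) ≠ 0 := by positivity
  have hb : ((N.choose m : ℕ):ℝ) ≠ 0 := Nat.cast_ne_zero.2 h1
  field_simp
  have := congrArg (fun k : ℕ => (k : ℝ)) key
  push_cast at this ⊢
  linarith

end Aux

set_option maxHeartbeats 1000000

/-- Integral with respect to a conditional measure. -/
lemma integral_cond_eq {Ω : Type*} [MeasurableSpace Ω] (μ : Measure Ω) {A : Set Ω}
    {q : ℝ} (hq0 : 0 < q) (hqA : μ A = ENNReal.ofReal q) (f : Ω → ℝ) :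
    ∫ ω, f ω ∂μ[|A] = q⁻¹ * ∫ ω in A, f ω ∂μ := by
  rw [ProbabilityTheory.cond, integral_smul_measure, hqA, smul_eq_mul,
    ← ENNReal.ofReal_inv_of_pos hq0, ENNReal.toReal_ofReal (by positivity)]

lemma ae_cond_mem {Ω : Type*} [MeasurableSpace Ω] (μ : Measure Ω) {A : Set Ω}
    (hA : MeasurableSet A) : ∀ᵐ ω ∂μ[|A], ω ∈ A := by
  rw [ae_iff]
  have : {ω | ¬ ω ∈ A} = Aᶜ := rfl
  rw [this, ProbabilityTheory.cond_apply hA, Set.inter_compl_self, measure_empty, mul_zero]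

lemma mgf_factor {Ω : Type*} [MeasurableSpace Ω] (μ : Measure Ω) [IsProbabilityMeasure μ]
    {A : Set Ω} (hA : MeasurableSet A) {q d c ε σ : ℝ} {X W : Ω → ℝ}
    (hqA : μ A = ENNReal.ofReal q) (hq0 : 0 < q) (hq1 : q ≤ 1)
    (hX : Measurable X) (hXbd : ∀ ω ∈ A, 0 ≤ X ω ∧ X ω ≤ d) (hd : 0 < d)
    (hc : ∫ ω, X ω ∂μ[|A] = c) (hσ : σ = 1 ∨ σ = -1)
    (hε : 0 < ε) (hεd : ε ≤ d)
    (hW : ∀ ω, W ω = if ω ∈ A then σ * (X ω - c) - ε else 0) :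
    mgf W μ (ε / d ^ 2) ≤ exp (-(q * (ε ^ 2 / (4 * d ^ 2)))) := by
  classical
  set s : ℝ := ε / d ^ 2 with hs_def
  set v : ℝ := ε ^ 2 / (4 * d ^ 2) with hv_def
  have hs : 0 < s := by positivity
  have hv : 0 < v := by positivity
  have hsd : s * d ≤ 1 := by
    rw [hs_def, div_mul_eq_mul_div, div_le_one (by positivity)]
    nlinarith
  have hsv1 : s * ε = 4 * v := by rw [hs_def, hv_def]; field_simp
  have hsv2 : s ^ 2 * d ^ 2 = 4 * v := by rw [hs_def, hv_def]; field_simp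
  have hv4 : v ≤ 1 / 4 := by rw [hv_def]; rw [div_le_div_iff₀ (by positivity) (by norm_num)]; nlinarith
  clear_value s v
  clear hs_def hv_def
  have hμA0 : μ A ≠ 0 := by
    rw [hqA]; simp only [ne_eq, ENNReal.ofReal_eq_zero, not_le]; linarith
  have : IsProbabilityMeasure μ[|A] := cond_isProbabilityMeasure hμA0
  have hmem : ∀ᵐ ω ∂μ[|A], ω ∈ A := ae_cond_mem μ hA
  have hXae : ∀ᵐ ω ∂μ[|A], 0 ≤ X ω ∧ X ω ≤ d := hmem.mono fun ω h => hXbd ω h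
  have intX : Integrable X μ[|A] := by
    refine Integrable.mono' (integrable_const d) hX.aestronglyMeasurable ?_
    filter_upwards [hXae] with ω h
    rw [Real.norm_eq_abs, abs_of_nonneg h.1]; exact h.2
  have hc0 : 0 ≤ c := by
    rw [← hc]; exact integral_nonneg_of_ae (hXae.mono fun ω h => h.1)
  have hcd : c ≤ d := by
    rw [← hc]
    calc ∫ ω, X ω ∂μ[|A] ≤ ∫ _, d ∂μ[|A] :=
          integral_mono_ae intX (integrable_const d) (hXae.mono fun ω h => h.2)
      _ = d := by simp
  have hσsq : σ ^ 2 = 1 := by rcases hσ with h | h <;> rw [h] <;> norm_num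
  have hσabs : |σ| = 1 := by rcases hσ with h | h <;> rw [h] <;> norm_num
  -- second moment bound
  have intsq : Integrable (fun ω => (X ω - c) ^ 2) μ[|A] := by
    refine Integrable.mono' (integrable_const (d ^ 2)) ?_ ?_
    · exact ((hX.sub measurable_const).pow_const 2).aestronglyMeasurable
    · filter_upwards [hXae] with ω h
      rw [Real.norm_eq_abs, abs_of_nonneg (by positivity)]
      nlinarith [h.1, h.2]
  have hI2 : ∫ ω, (X ω - c) ^ 2 ∂μ[|A] ≤ d ^ 2 / 4 := by
    have hpt : ∀ᵐ ω ∂μ[|A], (X ω - c) ^ 2 ≤ (d - 2 * c) * X ω + c ^ 2 := by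
      filter_upwards [hXae] with ω h
      nlinarith [h.1, h.2]
    have intR : Integrable (fun ω => (d - 2 * c) * X ω + c ^ 2) μ[|A] :=
      (intX.const_mul _).add (integrable_const _)
    calc ∫ ω, (X ω - c) ^ 2 ∂μ[|A] ≤ ∫ ω, ((d - 2 * c) * X ω + c ^ 2) ∂μ[|A] :=
          integral_mono_ae intsq intR hpt
      _ = (d - 2 * c) * c + c ^ 2 := by
          rw [integral_add (intX.const_mul _) (integrable_const _), integral_const_mul, hc,
            integral_const]; simp
      _ ≤ d ^ 2 / 4 := by nlinarith [sq_nonneg (d - 2 * c)]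
  -- conditional mgf bound
  have hEbd : ∫ ω, exp (s * (σ * (X ω - c))) ∂μ[|A] ≤ 1 + s ^ 2 * (d ^ 2 / 4) := by
    have hptw : ∀ᵐ ω ∂μ[|A],
        exp (s * (σ * (X ω - c))) ≤ 1 + s * (σ * (X ω - c)) + s ^ 2 * (X ω - c) ^ 2 := by
      filter_upwards [hXae] with ω h
      have habs : |s * (σ * (X ω - c))| ≤ 1 := by
        rw [abs_mul, abs_mul, hσabs, one_mul, abs_of_pos hs]
        have : |X ω - c| ≤ d := by rw [abs_le]; constructor <;> nlinarith [h.1, h.2]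
        nlinarith [mul_le_mul_of_nonneg_left this hs.le]
      have h2 := abs_le.1 (Real.abs_exp_sub_one_sub_id_le habs)
      have : (s * (σ * (X ω - c))) ^ 2 = s ^ 2 * (X ω - c) ^ 2 := by
        rw [mul_pow, mul_pow, hσsq]; ring
      nlinarith [h2.2]
    have intL : Integrable (fun ω => exp (s * (σ * (X ω - c)))) μ[|A] := by
      refine Integrable.mono' (integrable_const (exp 1)) ?_ ?_
      · exact (((hX.sub measurable_const).const_mul σ).const_mul s).exp.aestronglyMeasurable
      · filter_upwards [hXae] with ω h
        rw [Real.norm_eq_abs, abs_of_pos (exp_pos _), Real.exp_le_exp]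
        have : |X ω - c| ≤ d := by rw [abs_le]; constructor <;> nlinarith [h.1, h.2]
        calc s * (σ * (X ω - c)) ≤ |s * (σ * (X ω - c))| := le_abs_self _
          _ = s * |X ω - c| := by rw [abs_mul, abs_mul, hσabs, one_mul, abs_of_pos hs]
          _ ≤ s * d := by nlinarith
          _ ≤ 1 := hsd
    have intXC : Integrable (fun ω => X ω - c) μ[|A] := intX.sub (integrable_const c)
    have hY0 : ∫ ω, (X ω - c) ∂μ[|A] = 0 := by
      rw [integral_sub intX (integrable_const c), hc, integral_const]
      simp
    have ilin : Integrable (fun ω => s * (σ * (X ω - c))) μ[|A] :=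
      (intXC.const_mul σ).const_mul s
    have ilin1 : Integrable (fun ω => 1 + s * (σ * (X ω - c))) μ[|A] :=
      (integrable_const 1).add ilin
    have isq2 : Integrable (fun ω => s ^ 2 * (X ω - c) ^ 2) μ[|A] := intsq.const_mul _
    have intR : Integrable (fun ω => 1 + s * (σ * (X ω - c)) + s ^ 2 * (X ω - c) ^ 2) μ[|A] :=
      ilin1.add isq2
    calc ∫ ω, exp (s * (σ * (X ω - c))) ∂μ[|A]
        ≤ ∫ ω, (1 + s * (σ * (X ω - c)) + s ^ 2 * (X ω - c) ^ 2) ∂μ[|A] :=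
          integral_mono_ae intL intR hptw
      _ = 1 + s ^ 2 * ∫ ω, (X ω - c) ^ 2 ∂μ[|A] := by
          rw [integral_add ilin1 isq2, integral_add (integrable_const 1) ilin,
            integral_const, integral_const_mul, integral_const_mul, integral_const_mul, hY0]
          simp
      _ ≤ 1 + s ^ 2 * (d ^ 2 / 4) := by
          nlinarith [hI2, sq_nonneg s]
  -- measure of complement
  have hμAc : (μ Aᶜ).toReal = 1 - q := by
    rw [measure_compl hA (measure_ne_top μ A), measure_univ, hqA,
      ENNReal.toReal_sub_of_le (ENNReal.ofReal_le_one.2 hq1) (by simp),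
      ENNReal.toReal_one, ENNReal.toReal_ofReal hq0.le]
  have hgmeas : Measurable (fun ω => exp (s * (σ * (X ω - c) - ε))) :=
    ((((hX.sub measurable_const).const_mul σ).sub measurable_const).const_mul s).exp
  have hindA : Integrable (A.indicator (fun ω => exp (s * (σ * (X ω - c) - ε)))) μ := by
    refine Integrable.mono' (integrable_const (exp 1))
      (hgmeas.indicator hA).aestronglyMeasurable (ae_of_all _ fun ω => ?_)
    rw [Real.norm_eq_abs]
    by_cases hω : ω ∈ A
    · rw [Set.indicator_of_mem hω, abs_of_pos (exp_pos _), Real.exp_le_exp]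
      obtain ⟨h0, h1⟩ := hXbd ω hω
      have habs : σ * (X ω - c) ≤ d := by
        rcases hσ with h | h <;> rw [h] <;> nlinarith
      calc s * (σ * (X ω - c) - ε) ≤ s * d := by nlinarith
        _ ≤ 1 := hsd
    · rw [Set.indicator_of_notMem hω, abs_zero]
      exact (Real.exp_pos 1).le
  have hindAc : Integrable (Aᶜ.indicator (fun _ : Ω => (1 : ℝ))) μ :=
    (integrable_const 1).indicator hA.compl
  have hmgf_eq : mgf W μ s =
      (∫ ω in A, exp (s * (σ * (X ω - c) - ε)) ∂μ) + (μ Aᶜ).toReal := by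
    have hptw2 : ∀ ω, exp (s * W ω) =
        A.indicator (fun ω => exp (s * (σ * (X ω - c) - ε))) ω
          + Aᶜ.indicator (fun _ => (1 : ℝ)) ω := by
      intro ω
      by_cases hω : ω ∈ A
      · rw [Set.indicator_of_mem hω, Set.indicator_of_notMem (by simp [hω]), hW ω,
          if_pos hω, add_zero]
      · rw [Set.indicator_of_notMem hω, Set.indicator_of_mem (Set.mem_compl hω), hW ω,
          if_neg hω, mul_zero, Real.exp_zero, zero_add]
    calc mgf W μ s = ∫ ω, exp (s * W ω) ∂μ := rfl
      _ = ∫ ω, (A.indicator (fun ω => exp (s * (σ * (X ω - c) - ε))) ω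
            + Aᶜ.indicator (fun _ => (1 : ℝ)) ω) ∂μ := by simp only [hptw2]
      _ = (∫ ω, A.indicator (fun ω => exp (s * (σ * (X ω - c) - ε))) ω ∂μ)
            + ∫ ω, Aᶜ.indicator (fun _ => (1 : ℝ)) ω ∂μ := integral_add hindA hindAc
      _ = (∫ ω in A, exp (s * (σ * (X ω - c) - ε)) ∂μ) + (μ Aᶜ).toReal := by
          rw [integral_indicator hA, integral_indicator hA.compl, setIntegral_const, smul_eq_mul,
            mul_one]
          rfl
  have hEA : ∫ ω in A, exp (s * (σ * (X ω - c) - ε)) ∂μ =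
      q * ∫ ω, exp (s * (σ * (X ω - c) - ε)) ∂μ[|A] := by
    rw [integral_cond_eq μ hq0 hqA]
    field_simp
  have hsplit : ∫ ω, exp (s * (σ * (X ω - c) - ε)) ∂μ[|A] =
      exp (-(s * ε)) * ∫ ω, exp (s * (σ * (X ω - c))) ∂μ[|A] := by
    have h6 : ∀ ω, exp (s * (σ * (X ω - c) - ε)) =
        exp (-(s * ε)) * exp (s * (σ * (X ω - c))) := by
      intro ω; rw [← Real.exp_add]; ring_nf
    simp only [h6, integral_const_mul]
  have hcond_le : ∫ ω, exp (s * (σ * (X ω - c) - ε)) ∂μ[|A] ≤ exp (-(3 * v)) := by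
    rw [hsplit]
    have e1 : exp (-(s * ε)) * (1 + s ^ 2 * (d ^ 2 / 4)) ≤
        exp (-(s * ε)) * exp (s ^ 2 * (d ^ 2 / 4)) := by
      have := Real.add_one_le_exp (s ^ 2 * (d ^ 2 / 4))
      nlinarith [Real.exp_pos (-(s * ε))]
    have e2 : exp (-(s * ε)) * exp (s ^ 2 * (d ^ 2 / 4)) = exp (-(3 * v)) := by
      rw [← Real.exp_add]
      congr 1
      have : s ^ 2 * (d ^ 2 / 4) = s ^ 2 * d ^ 2 / 4 := by ring
      rw [this, hsv2, hsv1]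
      ring
    calc exp (-(s * ε)) * ∫ ω, exp (s * (σ * (X ω - c))) ∂μ[|A]
        ≤ exp (-(s * ε)) * (1 + s ^ 2 * (d ^ 2 / 4)) :=
          mul_le_mul_of_nonneg_left hEbd (Real.exp_pos _).le
      _ ≤ exp (-(s * ε)) * exp (s ^ 2 * (d ^ 2 / 4)) := e1
      _ = exp (-(3 * v)) := e2
  have h1 : v ≤ 1 - exp (-(3 * v)) := by
    have h2 := Real.add_one_le_exp (3 * v)
    have h4 := Real.exp_pos (3 * v)
    have h5 : exp (3 * v) * exp (-(3 * v)) = 1 := by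
      rw [← Real.exp_add]; simp
    nlinarith [Real.exp_pos (-(3 * v))]
  have h7 := Real.add_one_le_exp (-(q * v))
  rw [hmgf_eq, hEA, hμAc]
  nlinarith [hcond_le, mul_le_mul_of_nonneg_left hcond_le hq0.le, h1, hv]


lemma measure_mem_F {Ω : Type*} [MeasurableSpace Ω] {μ : Measure Ω} {M m : ℕ}
    {S : Finset (Fin M)} {F : Ω → Finset (Fin M)} {rt : Fin M → Ω → ℕ}
    (h : IsMinipatchRanking μ m S F rt) (j : Fin M) (hj : j ∈ S) (hm : 1 ≤ m)
    (hmN : m ≤ S.card) :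
    μ {ω | j ∈ F ω} = ENNReal.ofReal ((m : ℝ) / S.card) := by
  classical
  set 𝒜 := (S.powersetCard m).filter (fun A => j ∈ A) with h𝒜
  have hset : {ω | j ∈ F ω} = ⋃ A ∈ 𝒜, {ω | F ω = A} := by
    ext ω
    simp only [Set.mem_setOf_eq, Set.mem_iUnion, h𝒜, Finset.mem_filter,
      Finset.mem_powersetCard]
    constructor
    · intro hω
      exact ⟨F ω, ⟨⟨h.subset ω, h.card_eq ω⟩, hω⟩, rfl⟩
    · rintro ⟨A, ⟨_, hjA⟩, hFA⟩
      rw [hFA]; exact hjA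
  have hmeas : ∀ A : Finset (Fin M), MeasurableSet {ω | F ω = A} := by
    intro A
    exact h.measF (show MeasurableSet[⊤] {B : Finset (Fin M) | B = A} from trivial)
  have hdisj : (↑𝒜 : Set (Finset (Fin M))).PairwiseDisjoint
      (fun A => {ω | F ω = A}) := by
    intro A _ B _ hAB
    refine Set.disjoint_left.2 ?_
    intro ω hA hB
    exact hAB (hA.symm.trans hB)
  rw [hset, measure_biUnion_finset hdisj (fun A _ => hmeas A)]
  have : ∀ A ∈ 𝒜, μ {ω | F ω = A} = ((S.card.choose m : ℝ≥0∞))⁻¹ := by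
    intro A hA
    simp only [h𝒜, Finset.mem_filter, Finset.mem_powersetCard] at hA
    exact h.uniform A hA.1.1 hA.1.2
  rw [Finset.sum_congr rfl this, Finset.sum_const, card_contain M m S j hj hm]
  have hc0 : (S.card.choose m : ℝ) ≠ 0 := Nat.cast_ne_zero.2 (Nat.choose_pos hmN).ne'
  have hrw : ((m : ℝ) / S.card) = ((S.card - 1).choose (m-1) : ℝ) / (S.card.choose m) :=
    (choose_ratio S.card m hm hmN).symm
  rw [hrw, ENNReal.ofReal_div_of_pos (by positivity)]
  rw [ENNReal.ofReal_natCast, ENNReal.ofReal_natCast, nsmul_eq_mul, div_eq_mul_inv]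

lemma integral_set_transfer {Ω : Type*} [MeasurableSpace Ω] (μ : Measure Ω) {M : ℕ}
    {F F' : Ω → Finset (Fin M)} {rt rt' : Fin M → Ω → ℕ}
    (hF : Measurable F) (hrt : ∀ i, Measurable (rt i))
    (hF' : Measurable F') (hrt' : ∀ i, Measurable (rt' i))
    (hid : Measure.map (pairRV F rt) μ = Measure.map (pairRV F' rt') μ) (j : Fin M) :
    ∫ ω in {ω | j ∈ F ω}, (rt j ω : ℝ) ∂μ = ∫ ω in {ω | j ∈ F' ω}, (rt' j ω : ℝ) ∂μ := by
  classical
  set g : Finset (Fin M) × (Fin M → ℕ) → ℝ :=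
    fun p => if j ∈ p.1 then (p.2 j : ℝ) else 0 with hg
  have hgmeas : Measurable g := by
    refine Measurable.ite ?_ ?_ measurable_const
    · exact measurable_fst (show MeasurableSet {B : Finset (Fin M) | j ∈ B} from trivial)
    · exact measurable_from_top.comp ((measurable_pi_apply j).comp measurable_snd)
  have key : ∀ (G : Ω → Finset (Fin M)) (st : Fin M → Ω → ℕ), Measurable G →
      (∀ i, Measurable (st i)) →
      ∫ ω in {ω | j ∈ G ω}, (st j ω : ℝ) ∂μ = ∫ p, g p ∂(Measure.map (pairRV G st) μ) := by
    intro G st hG hst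
    have hpm : AEMeasurable (pairRV G st) μ :=
      (Measurable.prodMk hG (measurable_pi_lambda _ hst) :
        Measurable (pairRV G st)).aemeasurable
    rw [integral_map hpm hgmeas.aestronglyMeasurable]
    have hGs : MeasurableSet {ω | j ∈ G ω} :=
      hG (show MeasurableSet {B : Finset (Fin M) | j ∈ B} from trivial)
    rw [← integral_indicator hGs]
    congr 1
    ext ω
    by_cases hω : j ∈ G ω
    · rw [Set.indicator_of_mem (show ω ∈ {ω | j ∈ G ω} from hω)]
      simp [pairRV, hg, hω]
    · rw [Set.indicator_of_notMem (show ω ∉ {ω | j ∈ G ω} from hω)]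
      simp [pairRV, hg, hω]
  rw [key F rt hF hrt, key F' rt' hF' hrt', hid]


theorem ramp_concentration {Ω : Type*} [MeasurableSpace Ω] (μ : Measure Ω)
    [IsProbabilityMeasure μ] {M m N B : ℕ} (hm2 : 2 ≤ m) (hmM : m ≤ M)
    (S : Finset (Fin M)) (hN : S.card = N) (hmN : m ≤ N)
    (F : Ω → Finset (Fin M)) (rt : Fin M → Ω → ℕ)
    (hmp : IsMinipatchRanking μ m S F rt)
    (Fb : Fin B → Ω → Finset (Fin M)) (rtb : Fin B → Fin M → Ω → ℕ)
    (hramp : IsRAMP μ m S F rt Fb rtb)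
    (q : ℝ) (hq : q = (m : ℝ) / N)
    (j : Fin M) (hj : j ∈ S) (ε : ℝ) (hε : 0 < ε) :
    μ {ω | muRank μ F rt j + ε ≤ rampAvg μ F rt Fb rtb j ω} ≤
        ENNReal.ofReal (Real.exp (-(B * q) / 8) +
          Real.exp (-(B * q * ε ^ 2) / (4 * ((m : ℝ) - 1) ^ 2))) ∧
      μ {ω | rampAvg μ F rt Fb rtb j ω ≤ muRank μ F rt j - ε} ≤
        ENNReal.ofReal (Real.exp (-(B * q) / 8) +
          Real.exp (-(B * q * ε ^ 2) / (4 * ((m : ℝ) - 1) ^ 2))) := by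
  classical
  obtain ⟨copies, ident, indep⟩ := hramp
  set d : ℝ := (m : ℝ) - 1 with hd_def
  have hd : 0 < d := by
    rw [hd_def]
    have : (2 : ℝ) ≤ (m : ℝ) := by exact_mod_cast hm2
    linarith
  have hN0 : 0 < N := by omega
  have hq0 : 0 < q := by
    rw [hq]; positivity
  have hq1 : q ≤ 1 := by
    rw [hq, div_le_one (by positivity)]
    exact_mod_cast hmN
  set c : ℝ := muRank μ F rt j with hc_def
  have hc : ∫ ω, (rt j ω : ℝ) ∂μ[|{ω | j ∈ F ω}] = c := rfl
  have hm1 : 1 ≤ m := by omega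
  have hmS : m ≤ S.card := by omega
  -- measures of the membership events
  have hqA : μ {ω | j ∈ F ω} = ENNReal.ofReal q := by
    rw [measure_mem_F hmp j hj hm1 hmS, hN, hq]
  have hqAb : ∀ b, μ {ω | j ∈ Fb b ω} = ENNReal.ofReal q := by
    intro b
    rw [measure_mem_F (copies b) j hj hm1 hmS, hN, hq]
  have hAm : MeasurableSet {ω | j ∈ F ω} :=
    hmp.measF (show MeasurableSet {B : Finset (Fin M) | j ∈ B} from trivial)
  have hAbm : ∀ b, MeasurableSet {ω | j ∈ Fb b ω} := fun b =>
    (copies b).measF (show MeasurableSet {B : Finset (Fin M) | j ∈ B} from trivial)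
  -- pointwise rank bounds
  have hXb_le : ∀ (b : Fin B) ω, j ∈ Fb b ω → (rtb b j ω : ℝ) ≤ d := by
    intro b ω hbω
    have h1 : rtb b j ω < m := ((copies b).bij ω).mapsTo hbω
    have h2 : rtb b j ω ≤ m - 1 := by omega
    have h3 : ((rtb b j ω : ℕ) : ℝ) ≤ ((m - 1 : ℕ) : ℝ) := by exact_mod_cast h2
    rw [hd_def]
    rwa [Nat.cast_sub hm1, Nat.cast_one] at h3
  have hX_le : ∀ ω, j ∈ F ω → (rt j ω : ℝ) ≤ d := by
    intro ω hω
    have h1 : rt j ω < m := (hmp.bij ω).mapsTo hω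
    have h2 : rt j ω ≤ m - 1 := by omega
    have h3 : ((rt j ω : ℕ) : ℝ) ≤ ((m - 1 : ℕ) : ℝ) := by exact_mod_cast h2
    rw [hd_def]
    rwa [Nat.cast_sub hm1, Nat.cast_one] at h3
  have hμA0 : μ {ω | j ∈ F ω} ≠ 0 := by
    rw [hqA]; simp only [ne_eq, ENNReal.ofReal_eq_zero, not_le]; linarith
  have : IsProbabilityMeasure μ[|{ω | j ∈ F ω}] := cond_isProbabilityMeasure hμA0
  -- bounds on the conditional mean
  have hc0 : 0 ≤ c := by
    rw [← hc]
    exact integral_nonneg fun ω => Nat.cast_nonneg _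
  have hcd : c ≤ d := by
    rw [← hc]
    have hmem := ae_cond_mem μ hAm
    have hae : ∀ᵐ ω ∂μ[|{ω | j ∈ F ω}], (rt j ω : ℝ) ≤ d :=
      hmem.mono fun ω h => hX_le ω h
    have intX : Integrable (fun ω => (rt j ω : ℝ)) μ[|{ω | j ∈ F ω}] := by
      refine Integrable.mono' (integrable_const d)
        (measurable_from_top.comp (hmp.measRt j)).aestronglyMeasurable ?_
      filter_upwards [hae] with ω h
      rw [Real.norm_eq_abs, abs_of_nonneg (Nat.cast_nonneg _)]
      exact h
    calc ∫ ω, (rt j ω : ℝ) ∂μ[|{ω | j ∈ F ω}] ≤ ∫ _, d ∂μ[|{ω | j ∈ F ω}] :=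
          integral_mono_ae intX (integrable_const d) hae
      _ = d := by simp
  -- transfer of the conditional mean to the copies
  have hcb : ∀ b, ∫ ω, (rtb b j ω : ℝ) ∂μ[|{ω | j ∈ Fb b ω}] = c := by
    intro b
    have ht := integral_set_transfer μ (copies b).measF (copies b).measRt hmp.measF
      hmp.measRt (ident b) j
    rw [integral_cond_eq μ hq0 (hqAb b), ht, ← integral_cond_eq μ hq0 hqA, hc]
  rcases le_or_gt ε d with hεd | hdε
  · -- main concentration case : ε ≤ d
    have main : ∀ σ : ℝ, σ = 1 ∨ σ = -1 →
        μ {ω | (0:ℝ) ≤ ∑ b : Fin B,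
            (if j ∈ Fb b ω then σ * ((rtb b j ω : ℝ) - c) - ε else 0)} ≤
          ENNReal.ofReal (Real.exp (-(B * q * ε ^ 2) / (4 * d ^ 2))) := by
      intro σ hσ
      set g : Finset (Fin M) × (Fin M → ℕ) → ℝ :=
        fun p => if j ∈ p.1 then σ * ((p.2 j : ℝ) - c) - ε else 0 with hgdef
      have hgm : Measurable g := by
        refine Measurable.ite ?_ ?_ measurable_const
        · exact measurable_fst (show MeasurableSet {B : Finset (Fin M) | j ∈ B} from trivial)
        · exact (((measurable_from_top.comp
            ((measurable_pi_apply j).comp measurable_snd)).sub measurable_const).const_mul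
            σ).sub measurable_const
      set W : Fin B → Ω → ℝ := fun b => g ∘ pairRV (Fb b) (rtb b) with hWdef
      have hWeq : ∀ b ω, W b ω = if j ∈ Fb b ω then σ * ((rtb b j ω : ℝ) - c) - ε else 0 :=
        fun b ω => rfl
      have hWm : ∀ b, Measurable (W b) := fun b =>
        hgm.comp ((copies b).measF.prodMk (measurable_pi_lambda _ (copies b).measRt))
      have hindep : iIndepFun W μ :=
        indep.comp (fun _ => g) (fun _ => hgm)
      set s : ℝ := ε / d ^ 2 with hs_def
      have hs : 0 < s := by positivity
      have hsd : s * d ≤ 1 := by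
        rw [hs_def, div_mul_eq_mul_div, div_le_one (by positivity)]
        nlinarith
      have hWle : ∀ b ω, s * W b ω ≤ 1 := by
        intro b ω
        rw [hWeq]
        by_cases hω : j ∈ Fb b ω
        · rw [if_pos hω]
          have h1 : (0:ℝ) ≤ (rtb b j ω : ℝ) := Nat.cast_nonneg _
          have h2 := hXb_le b ω hω
          have h3 : σ * ((rtb b j ω : ℝ) - c) ≤ d := by
            rcases hσ with h | h <;> rw [h] <;> nlinarith
          nlinarith
        · rw [if_neg hω, mul_zero]; norm_num
      have hint : ∀ b, Integrable (fun ω => Real.exp (s * W b ω)) μ := by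
        intro b
        refine Integrable.mono' (integrable_const (Real.exp 1))
          (((hWm b).const_mul s).exp).aestronglyMeasurable (ae_of_all _ fun ω => ?_)
        rw [Real.norm_eq_abs, abs_of_pos (Real.exp_pos _), Real.exp_le_exp]
        exact hWle b ω
      have hintsum : Integrable (fun ω => Real.exp (s * (∑ b : Fin B, W b) ω)) μ :=
        hindep.integrable_exp_mul_sum hWm fun b _ => hint b
      have hch := measure_ge_le_exp_mul_mgf (μ := μ) (X := ∑ b : Fin B, W b) 0 hs.le hintsum
      simp only [mul_zero, Real.exp_zero, one_mul] at hch
      have hmgfsum := hindep.mgf_sum (t := s) hWm Finset.univ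
      have hfac : ∀ b, mgf (W b) μ s ≤ Real.exp (-(q * (ε ^ 2 / (4 * d ^ 2)))) := by
        intro b
        refine mgf_factor μ (X := fun ω => (rtb b j ω : ℝ)) (W := W b) (hAbm b) (hqAb b) hq0 hq1
          (by exact measurable_from_top.comp ((copies b).measRt j)) ?_ hd (hcb b) hσ hε hεd ?_
        · intro ω hω
          exact ⟨Nat.cast_nonneg _, hXb_le b ω hω⟩
        · intro ω
          rw [hWeq]
          simp only [Set.mem_setOf_eq]
      have hprod : ∏ b : Fin B, mgf (W b) μ s ≤ Real.exp (-(B * q * ε ^ 2) / (4 * d ^ 2)) := by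
        calc ∏ b : Fin B, mgf (W b) μ s
            ≤ ∏ _b : Fin B, Real.exp (-(q * (ε ^ 2 / (4 * d ^ 2)))) :=
              Finset.prod_le_prod (fun b _ => mgf_nonneg) (fun b _ => hfac b)
          _ = Real.exp (-(q * (ε ^ 2 / (4 * d ^ 2)))) ^ B := by
              rw [Finset.prod_const, Finset.card_univ, Fintype.card_fin]
          _ = Real.exp (-(B * q * ε ^ 2) / (4 * d ^ 2)) := by
              rw [← Real.exp_nat_mul]
              congr 1
              field_simp
      have hset : {ω | (0:ℝ) ≤ ∑ b : Fin B,
          (if j ∈ Fb b ω then σ * ((rtb b j ω : ℝ) - c) - ε else 0)}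
          = {ω | (0:ℝ) ≤ (∑ b : Fin B, W b) ω} := by
        ext ω
        simp only [Set.mem_setOf_eq, Finset.sum_apply]
        constructor <;> intro h <;> simpa [hWeq] using h
      rw [hset, ← ENNReal.ofReal_toReal (measure_ne_top μ _)]
      exact ENNReal.ofReal_le_ofReal (le_trans hch (hmgfsum ▸ hprod))
    have hofReal : ENNReal.ofReal (Real.exp (-(B * q * ε ^ 2) / (4 * d ^ 2))) ≤
        ENNReal.ofReal (Real.exp (-(B * q) / 8) +
          Real.exp (-(B * q * ε ^ 2) / (4 * ((m : ℝ) - 1) ^ 2))) := by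
      rw [← hd_def]
      exact ENNReal.ofReal_le_ofReal (le_add_of_nonneg_left (Real.exp_pos _).le)
    constructor
    · refine le_trans (measure_mono ?_) (le_trans (main 1 (Or.inl rfl)) hofReal)
      intro ω h
      simp only [Set.mem_setOf_eq] at h ⊢
      have hsum : ∑ b : Fin B, (if j ∈ Fb b ω then 1 * ((rtb b j ω : ℝ) - c) - ε else 0)
          = ∑ b ∈ Finset.univ.filter (fun b : Fin B => j ∈ Fb b ω),
              (1 * ((rtb b j ω : ℝ) - c) - ε) := (Finset.sum_filter _ _).symm
      rw [hsum]
      rw [rampAvg] at h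
      by_cases hn : (Finset.univ.filter (fun b : Fin B => j ∈ Fb b ω)).card = 0
      · rw [if_pos hn, ← hc_def] at h
        linarith
      · rw [if_neg hn] at h
        have hn' : 0 < ((Finset.univ.filter (fun b : Fin B => j ∈ Fb b ω)).card : ℝ) := by
          have := Nat.pos_of_ne_zero hn
          exact_mod_cast this
        rw [le_div_iff₀ hn'] at h
        have hexp : ∑ b ∈ Finset.univ.filter (fun b : Fin B => j ∈ Fb b ω),
            (1 * ((rtb b j ω : ℝ) - c) - ε)
            = (∑ b ∈ Finset.univ.filter (fun b : Fin B => j ∈ Fb b ω), (rtb b j ω : ℝ))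
              - ((Finset.univ.filter (fun b : Fin B => j ∈ Fb b ω)).card : ℝ) * (c + ε) := by
          rw [Finset.sum_congr rfl (fun b _ => by ring :
            ∀ b ∈ Finset.univ.filter (fun b : Fin B => j ∈ Fb b ω),
              1 * ((rtb b j ω : ℝ) - c) - ε = (rtb b j ω : ℝ) - (c + ε)),
            Finset.sum_sub_distrib, Finset.sum_const, nsmul_eq_mul]
        rw [hexp]
        linarith
    · refine le_trans (measure_mono ?_) (le_trans (main (-1) (Or.inr rfl)) hofReal)
      intro ω h
      simp only [Set.mem_setOf_eq] at h ⊢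
      have hsum : ∑ b : Fin B, (if j ∈ Fb b ω then (-1) * ((rtb b j ω : ℝ) - c) - ε else 0)
          = ∑ b ∈ Finset.univ.filter (fun b : Fin B => j ∈ Fb b ω),
              ((-1) * ((rtb b j ω : ℝ) - c) - ε) := (Finset.sum_filter _ _).symm
      rw [hsum]
      rw [rampAvg] at h
      by_cases hn : (Finset.univ.filter (fun b : Fin B => j ∈ Fb b ω)).card = 0
      · rw [if_pos hn, ← hc_def] at h
        linarith
      · rw [if_neg hn] at h
        have hn' : 0 < ((Finset.univ.filter (fun b : Fin B => j ∈ Fb b ω)).card : ℝ) := by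
          have := Nat.pos_of_ne_zero hn
          exact_mod_cast this
        rw [div_le_iff₀ hn'] at h
        have hexp : ∑ b ∈ Finset.univ.filter (fun b : Fin B => j ∈ Fb b ω),
            ((-1) * ((rtb b j ω : ℝ) - c) - ε)
            = ((Finset.univ.filter (fun b : Fin B => j ∈ Fb b ω)).card : ℝ) * (c - ε)
              - (∑ b ∈ Finset.univ.filter (fun b : Fin B => j ∈ Fb b ω), (rtb b j ω : ℝ)) := by
          rw [Finset.sum_congr rfl (fun b _ => by ring :
            ∀ b ∈ Finset.univ.filter (fun b : Fin B => j ∈ Fb b ω),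
              (-1) * ((rtb b j ω : ℝ) - c) - ε = (c - ε) - (rtb b j ω : ℝ)),
            Finset.sum_sub_distrib, Finset.sum_const, nsmul_eq_mul]
        rw [hexp]
        linarith
  · -- degenerate case : d < ε, the events are empty
    have hravg_mem : ∀ ω, (0:ℝ) ≤ rampAvg μ F rt Fb rtb j ω ∧
        rampAvg μ F rt Fb rtb j ω ≤ max c d := by
      intro ω
      rw [rampAvg]
      by_cases hn : (Finset.univ.filter (fun b : Fin B => j ∈ Fb b ω)).card = 0
      · rw [if_pos hn, ← hc_def]
        exact ⟨hc0, le_max_left _ _⟩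
      · rw [if_neg hn]
        have hn' : 0 < ((Finset.univ.filter (fun b : Fin B => j ∈ Fb b ω)).card : ℝ) := by
          have := Nat.pos_of_ne_zero hn
          exact_mod_cast this
        constructor
        · apply div_nonneg _ hn'.le
          exact Finset.sum_nonneg fun b _ => Nat.cast_nonneg _
        · have hsum_le : ∑ b ∈ Finset.univ.filter (fun b : Fin B => j ∈ Fb b ω),
              (rtb b j ω : ℝ) ≤ (Finset.univ.filter (fun b : Fin B => j ∈ Fb b ω)).card • d :=
            Finset.sum_le_card_nsmul _ _ _ (fun b hb => hXb_le b ω (Finset.mem_filter.1 hb).2)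
          rw [nsmul_eq_mul] at hsum_le
          refine le_trans ?_ (le_max_right c d)
          rw [div_le_iff₀ hn']
          linarith
    constructor
    · have hempty : {ω | muRank μ F rt j + ε ≤ rampAvg μ F rt Fb rtb j ω} = ∅ := by
        ext ω
        simp only [Set.mem_setOf_eq, Set.mem_empty_iff_false, iff_false, not_le, ← hc_def]
        rcases hravg_mem ω with ⟨h0, h1⟩
        rcases max_cases c d with ⟨he, _⟩ | ⟨he, _⟩ <;> rw [he] at h1 <;> linarith
      rw [hempty, measure_empty]
      exact zero_le
    · have hempty : {ω | rampAvg μ F rt Fb rtb j ω ≤ muRank μ F rt j - ε} = ∅ := by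
        ext ω
        simp only [Set.mem_setOf_eq, Set.mem_empty_iff_false, iff_false, not_le, ← hc_def]
        rcases hravg_mem ω with ⟨h0, _⟩
        linarith
      rw [hempty, measure_empty]
      exact zero_le
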